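/- An arrangement of n lines in the real plane divides the plane into at most (n^2+n+2)/2 connected regions. -/

import Mathlib

open Set Function



/-- convex combination stays strictly below -/
lemma combo_lt {u v c t : ℝ} (hu : u < c) (hv : v < c) (h0 : 0 ≤ t) (h1 : t ≤ 1) :
    (1 - t) * u + t * v < c := by
  have h2 : (1 - t) * u ≤ (1 - t) * c := mul_le_mul_of_nonneg_left hu.le (by linarith)
  rcases eq_or_lt_of_le h0 with h | h
  · rw [← h]; simpa using hu
  · have h3 : t * v < t * c := mul_lt_mul_of_pos_left hv h
    nlinarith

lemma combo_gt {u v c t : ℝ} (hu : c < u) (hv : c < v) (h0 : 0 ≤ t) (h1 : t ≤ 1) :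
    c < (1 - t) * u + t * v := by
  have h2 : (1 - t) * c ≤ (1 - t) * u := mul_le_mul_of_nonneg_left hu.le (by linarith)
  rcases eq_or_lt_of_le h0 with h | h
  · rw [← h]; simpa using hu
  · have h3 : t * c < t * v := mul_lt_mul_of_pos_left hv h
    nlinarith

lemma combo_side {u v c t : ℝ} (hu : u ≠ c) (hv : v ≠ c) (hiff : u < c ↔ v < c)
    (h0 : 0 ≤ t) (h1 : t ≤ 1) :
    (1 - t) * u + t * v ≠ c ∧ ((1 - t) * u + t * v < c ↔ u < c) := by
  rcases lt_or_gt_of_ne hu with h | h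
  · have hv' : v < c := hiff.mp h
    have := combo_lt h hv' h0 h1
    exact ⟨ne_of_lt this, by constructor <;> intro <;> [exact h; exact this]⟩
  · have hv' : c < v := by
      rcases lt_or_gt_of_ne hv with h' | h'
      · exact absurd (hiff.mpr h') (not_lt_of_gt h)
      · exact h'
    have := combo_gt h hv' h0 h1
    exact ⟨ne_of_gt this, by constructor <;> intro h'' <;> [exact absurd h'' (not_lt_of_gt this); exact absurd h'' (not_lt_of_gt h)]⟩

/-- crossing parameter -/
lemma cross_param {g0 g1 c : ℝ} (h0 : g0 < c) (h1 : c < g1) :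
    ∃ s : ℝ, 0 ≤ s ∧ s ≤ 1 ∧ (1 - s) * g0 + s * g1 = c := by
  refine ⟨(c - g0) / (g1 - g0), div_nonneg (by linarith) (by linarith), ?_, ?_⟩
  · rw [div_le_one (by linarith)]; linarith
  · have h : (c - g0) / (g1 - g0) * (g1 - g0) = c - g0 := div_mul_cancel₀ _ (by linarith)
    linear_combination h

/-- generic split counting lemma for sets of boolean vectors -/
lemma split_count {m : ℕ} (S : Set (Fin (m+1) → Bool)) :
    S.ncard ≤ (Fin.init '' S).ncard +
      {σ' : Fin m → Bool | Fin.snoc σ' true ∈ S ∧ Fin.snoc σ' false ∈ S}.ncard := by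
  classical
  set A : Set (Fin (m+1) → Bool) := {σ ∈ S | σ (Fin.last m) = true} with hA
  set B : Set (Fin (m+1) → Bool) := {σ ∈ S | σ (Fin.last m) = false} with hB
  have hSAB : S = A ∪ B := by
    ext σ; simp only [hA, hB, Set.mem_union, Set.mem_setOf_eq]
    rcases Bool.eq_false_or_eq_true (σ (Fin.last m)) with h | h <;> simp [h]
  have hinjA : Set.InjOn Fin.init A := by
    intro σ hσ τ hτ h
    have : Fin.snoc (Fin.init σ) (σ (Fin.last m)) = Fin.snoc (Fin.init τ) (τ (Fin.last m)) := by
      rw [h, hσ.2, hτ.2]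
    rwa [Fin.snoc_init_self, Fin.snoc_init_self] at this
  have hinjB : Set.InjOn Fin.init B := by
    intro σ hσ τ hτ h
    have : Fin.snoc (Fin.init σ) (σ (Fin.last m)) = Fin.snoc (Fin.init τ) (τ (Fin.last m)) := by
      rw [h, hσ.2, hτ.2]
    rwa [Fin.snoc_init_self, Fin.snoc_init_self] at this
  have hU : Fin.init '' A ∪ Fin.init '' B = Fin.init '' S := by
    rw [hSAB, Set.image_union]
  have hI : Fin.init '' A ∩ Fin.init '' B ⊆
      {σ' : Fin m → Bool | Fin.snoc σ' true ∈ S ∧ Fin.snoc σ' false ∈ S} := by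
    rintro σ' ⟨⟨σ, hσ, rfl⟩, ⟨τ, hτ, hτ'⟩⟩
    constructor
    · have : Fin.snoc (Fin.init σ) true = σ := by
        conv_rhs => rw [← Fin.snoc_init_self σ]
        rw [hσ.2]
      rw [this]; exact hσ.1
    · have : Fin.snoc (Fin.init σ) false = τ := by
        conv_rhs => rw [← Fin.snoc_init_self τ]
        rw [hτ.2, hτ']
      rw [this]; exact hτ.1
  have hdisj : Disjoint A B := by
    rw [Set.disjoint_left]; rintro σ ⟨-, h1⟩ ⟨-, h2⟩; rw [h1] at h2; exact Bool.noConfusion h2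
  have e1 : S.ncard = A.ncard + B.ncard := by
    rw [hSAB, Set.ncard_union_eq hdisj (Set.toFinite _) (Set.toFinite _)]
  have e2 : A.ncard = (Fin.init '' A).ncard := (Set.ncard_image_of_injOn hinjA).symm
  have e3 : B.ncard = (Fin.init '' B).ncard := (Set.ncard_image_of_injOn hinjB).symm
  have e4 := Set.ncard_union_add_ncard_inter (Fin.init '' A) (Fin.init '' B) (Set.toFinite _) (Set.toFinite _)
  have e5 : (Fin.init '' A ∪ Fin.init '' B).ncard ≤ (Fin.init '' S).ncard := by
    rw [hU]
  have e6 : (Fin.init '' A ∩ Fin.init '' B).ncard ≤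
      {σ' : Fin m → Bool | Fin.snoc σ' true ∈ S ∧ Fin.snoc σ' false ∈ S}.ncard :=
    Set.ncard_le_ncard hI (Set.toFinite _)
  omega


def pat1 (m : ℕ) (α β : Fin m → ℝ) : Set (Fin m → Bool) :=
  {σ | ∃ t : ℝ, ∀ i, α i * t ≠ β i ∧ σ i = decide (α i * t < β i)}

lemma pat1_card (m : ℕ) (α β : Fin m → ℝ) : (pat1 m α β).ncard ≤ m + 1 := by
  induction m with
  | zero =>
    have h1 : (pat1 0 α β).ncard ≤ (Set.univ : Set (Fin 0 → Bool)).ncard :=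
      Set.ncard_le_ncard (Set.subset_univ _) (Set.toFinite _)
    rwa [Set.ncard_univ, Nat.card_eq_fintype_card, Fintype.card_fun] at h1
  | succ m ih =>
    have hsplit := split_count (pat1 (m+1) α β)
    -- image bound
    have himg : Fin.init '' (pat1 (m+1) α β) ⊆
        pat1 m (fun i => α i.castSucc) (fun i => β i.castSucc) := by
      rintro σ' ⟨σ, ⟨t, ht⟩, rfl⟩
      exact ⟨t, fun i => ⟨(ht i.castSucc).1, (ht i.castSucc).2⟩⟩
    have himg' : (Fin.init '' (pat1 (m+1) α β)).ncard ≤ m + 1 :=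
      le_trans (Set.ncard_le_ncard himg (Set.toFinite _)) (ih _ _)
    -- double set bound
    set D := {σ' : Fin m → Bool | Fin.snoc σ' true ∈ pat1 (m+1) α β ∧
        Fin.snoc σ' false ∈ pat1 (m+1) α β} with hD
    have hDsub : D.ncard ≤ 1 := by
      rw [Set.ncard_le_one (Set.toFinite _)]
      intro σ hσ τ hτ
      -- each element of D equals the pattern at the crossing point t0
      have key : ∀ ρ ∈ D, ∀ i : Fin m,
          ρ i = decide (α i.castSucc * (β (Fin.last m) / α (Fin.last m)) < β i.castSucc) := by
        rintro ρ ⟨⟨tp, htp⟩, ⟨tq, htq⟩⟩ i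
        have hp : α (Fin.last m) * tp < β (Fin.last m) := by
          have := (htp (Fin.last m)).2
          rw [Fin.snoc_last] at this
          exact of_decide_eq_true this.symm
        have hq : β (Fin.last m) < α (Fin.last m) * tq := by
          have h2 := (htq (Fin.last m)).2
          rw [Fin.snoc_last] at h2
          have := of_decide_eq_false h2.symm
          exact lt_of_le_of_ne (not_lt.mp this) (Ne.symm (htq (Fin.last m)).1)
        obtain ⟨s, hs0, hs1, hs⟩ := cross_param hp hq
        have hαne : α (Fin.last m) ≠ 0 := by
          intro h; rw [h] at hp hq; simp at hp hq; linarith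
        -- t0 := (1-s)*tp + s*tq satisfies α_last * t0 = β_last, so t0 = β/α
        have ht0 : (1 - s) * tp + s * tq = β (Fin.last m) / α (Fin.last m) := by
          rw [eq_div_iff hαne]
          linear_combination hs
        have hval : ∀ j : Fin m,
            α j.castSucc * ((1-s) * tp + s * tq) ≠ β j.castSucc ∧
            (α j.castSucc * ((1-s) * tp + s * tq) < β j.castSucc ↔ α j.castSucc * tp < β j.castSucc) := by
          intro j
          have h1 := htp j.castSucc
          have h2 := htq j.castSucc
          rw [Fin.snoc_castSucc] at h1 h2
          have hiff : α j.castSucc * tp < β j.castSucc ↔ α j.castSucc * tq < β j.castSucc := by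
            rw [← decide_eq_decide, ← h1.2, ← h2.2]
          have := combo_side h1.1 h2.1 hiff hs0 hs1
          constructor
          · intro h; apply this.1; rw [← h]; ring
          · rw [show α j.castSucc * ((1-s)*tp + s*tq) =
              (1-s) * (α j.castSucc * tp) + s * (α j.castSucc * tq) by ring]
            exact this.2
        have h1 := htp i.castSucc
        rw [Fin.snoc_castSucc] at h1
        rw [h1.2, ← ht0]
        rw [decide_eq_decide]
        exact ((hval i).2).symm
      funext i
      rw [key σ hσ i, key τ hτ i]
    calc (pat1 (m+1) α β).ncard ≤ _ := hsplit
      _ ≤ (m + 1) + 1 := by omega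


def pat2 (n : ℕ) (a b c : Fin n → ℝ) : Set (Fin n → Bool) :=
  {σ | ∃ x y : ℝ, ∀ i, a i * x + b i * y ≠ c i ∧ σ i = decide (a i * x + b i * y < c i)}

lemma pat2_card (n : ℕ) (a b c : Fin n → ℝ) (hline : ∀ i, (a i, b i) ≠ (0, 0)) :
    (pat2 n a b c).ncard ≤ (n ^ 2 + n + 2) / 2 := by
  induction n with
  | zero =>
    have h1 : (pat2 0 a b c).ncard ≤ (Set.univ : Set (Fin 0 → Bool)).ncard :=
      Set.ncard_le_ncard (Set.subset_univ _) (Set.toFinite _)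
    rw [Set.ncard_univ, Nat.card_eq_fintype_card, Fintype.card_fun] at h1
    simpa using h1
  | succ n ih =>
    have hsplit := split_count (pat2 (n+1) a b c)
    have himg : Fin.init '' (pat2 (n+1) a b c) ⊆
        pat2 n (fun i => a i.castSucc) (fun i => b i.castSucc) (fun i => c i.castSucc) := by
      rintro σ' ⟨σ, ⟨x, y, h⟩, rfl⟩
      exact ⟨x, y, fun i => ⟨(h i.castSucc).1, (h i.castSucc).2⟩⟩
    have himg' : (Fin.init '' (pat2 (n+1) a b c)).ncard ≤ (n ^ 2 + n + 2) / 2 :=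
      le_trans (Set.ncard_le_ncard himg (Set.toFinite _))
        (ih _ _ _ (fun i => hline i.castSucc))
    -- set up the parametrization of the last line
    set A := a (Fin.last n) with hA
    set B := b (Fin.last n) with hB
    set C := c (Fin.last n) with hC
    have hAB : A ≠ 0 ∨ B ≠ 0 := by
      have := hline (Fin.last n)
      by_contra h
      push_neg at h
      exact this (by rw [← hA, ← hB, h.1, h.2])
    have hden : (0:ℝ) < A ^ 2 + B ^ 2 := by
      rcases hAB with h | h
      · have : 0 < A ^ 2 := by positivity
        nlinarith [sq_nonneg B]
      · have : 0 < B ^ 2 := by positivity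
        nlinarith [sq_nonneg A]
    set p0x : ℝ := A * C / (A ^ 2 + B ^ 2) with hp0x
    set p0y : ℝ := B * C / (A ^ 2 + B ^ 2) with hp0y
    have hp0 : A * p0x + B * p0y = C := by
      rw [hp0x, hp0y]
      field_simp
    set α : Fin n → ℝ := fun i => b i.castSucc * A - a i.castSucc * B with hα
    set β : Fin n → ℝ := fun i => c i.castSucc - (a i.castSucc * p0x + b i.castSucc * p0y) with hβ
    have hDsub : {σ' : Fin n → Bool | Fin.snoc σ' true ∈ pat2 (n+1) a b c ∧
        Fin.snoc σ' false ∈ pat2 (n+1) a b c} ⊆ pat1 n α β := by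
      rintro σ' ⟨⟨xp, yp, hp⟩, ⟨xq, yq, hq⟩⟩
      have hplast : A * xp + B * yp < C := by
        have := (hp (Fin.last n)).2
        rw [Fin.snoc_last] at this
        exact of_decide_eq_true this.symm
      have hqlast : C < A * xq + B * yq := by
        have h2 := (hq (Fin.last n)).2
        rw [Fin.snoc_last] at h2
        have := of_decide_eq_false h2.symm
        exact lt_of_le_of_ne (not_lt.mp this) (Ne.symm (hq (Fin.last n)).1)
      obtain ⟨s, hs0, hs1, hs⟩ := cross_param hplast hqlast
      set z1 : ℝ := (1 - s) * xp + s * xq with hz1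
      set z2 : ℝ := (1 - s) * yp + s * yq with hz2
      have hzline : A * z1 + B * z2 = C := by
        rw [hz1, hz2]; linear_combination hs
      set t : ℝ := (A * (z2 - p0y) - B * (z1 - p0x)) / (A ^ 2 + B ^ 2) with ht
      have hu : A * (z1 - p0x) + B * (z2 - p0y) = 0 := by
        linear_combination hzline - hp0
      have hzt1 : z1 = p0x - B * t := by
        rw [ht]
        field_simp
        linear_combination (A) * hu
      have hzt2 : z2 = p0y + A * t := by
        rw [ht]
        field_simp
        linear_combination (B) * hu
      refine ⟨t, fun i => ?_⟩
      -- value of line i at z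
      have hval : a i.castSucc * z1 + b i.castSucc * z2 =
          (a i.castSucc * p0x + b i.castSucc * p0y) + α i * t := by
        rw [hzt1, hzt2, hα]; ring
      have hcombo : a i.castSucc * z1 + b i.castSucc * z2 =
          (1 - s) * (a i.castSucc * xp + b i.castSucc * yp)
          + s * (a i.castSucc * xq + b i.castSucc * yq) := by
        rw [hz1, hz2]; ring
      have h1 := hp i.castSucc
      have h2 := hq i.castSucc
      rw [Fin.snoc_castSucc] at h1 h2
      have hiff : a i.castSucc * xp + b i.castSucc * yp < c i.castSucc ↔
          a i.castSucc * xq + b i.castSucc * yq < c i.castSucc := by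
        rw [← decide_eq_decide, ← h1.2, ← h2.2]
      have hside := combo_side h1.1 h2.1 hiff hs0 hs1
      rw [← hcombo] at hside
      constructor
      · intro h
        apply hside.1
        rw [hval]
        simp only [hβ] at h
        linarith
      · rw [h1.2, decide_eq_decide, ← hside.2, hval]
        simp only [hβ]
        constructor <;> intro <;> linarith
    have hD : {σ' : Fin n → Bool | Fin.snoc σ' true ∈ pat2 (n+1) a b c ∧
        Fin.snoc σ' false ∈ pat2 (n+1) a b c}.ncard ≤ n + 1 :=
      le_trans (Set.ncard_le_ncard hDsub (Set.toFinite _)) (pat1_card n α β)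
    -- arithmetic
    have hsq : (n + 1) ^ 2 = n ^ 2 + 2 * n + 1 := by ring
    obtain ⟨k, hk⟩ := Nat.even_mul_succ_self n
    have hk' : n ^ 2 + n = k + k := by rw [← hk]; ring
    omega



lemma same_pattern_same_component {n : ℕ} (a b c : Fin n → ℝ)
    (x y : {x : ℝ × ℝ // ∀ i, a i * x.1 + b i * x.2 ≠ c i})
    (h : ∀ i, (a i * (x:ℝ×ℝ).1 + b i * (x:ℝ×ℝ).2 < c i ↔
               a i * (y:ℝ×ℝ).1 + b i * (y:ℝ×ℝ).2 < c i)) :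
    ConnectedComponents.mk x = ConnectedComponents.mk y := by
  have mem : ∀ t : ℝ, 0 ≤ t → t ≤ 1 → ∀ i,
      a i * ((1-t) * (x:ℝ×ℝ).1 + t * (y:ℝ×ℝ).1)
      + b i * ((1-t) * (x:ℝ×ℝ).2 + t * (y:ℝ×ℝ).2) ≠ c i := by
    intro t h0 h1 i
    have hr : a i * ((1-t) * (x:ℝ×ℝ).1 + t * (y:ℝ×ℝ).1)
        + b i * ((1-t) * (x:ℝ×ℝ).2 + t * (y:ℝ×ℝ).2)
        = (1-t) * (a i * (x:ℝ×ℝ).1 + b i * (x:ℝ×ℝ).2)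
          + t * (a i * (y:ℝ×ℝ).1 + b i * (y:ℝ×ℝ).2) := by ring
    rw [hr]
    exact (combo_side (x.2 i) (y.2 i) (h i) h0 h1).1
  have hjoined : Joined x y := by
    constructor
    refine ⟨⟨fun t => ⟨((1-(t:ℝ)) * (x:ℝ×ℝ).1 + (t:ℝ) * (y:ℝ×ℝ).1, (1-(t:ℝ)) * (x:ℝ×ℝ).2 + (t:ℝ) * (y:ℝ×ℝ).2), mem t t.2.1 t.2.2⟩, ?_⟩, ?_, ?_⟩
    · apply Continuous.subtype_mk
      fun_prop
    · apply Subtype.ext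
      simp
    · apply Subtype.ext
      simp
  exact ConnectedComponents.coe_eq_coe.mpr
    (connectedComponent_eq (pathComponent_subset_component x hjoined))


/-- `n` lines in the real plane divide it into at most `(n^2+n+2)/2` regions. -/
theorem line_arrangement_regions_le (n : ℕ) (a b c : Fin n → ℝ)
    (hline : ∀ i, (a i, b i) ≠ (0, 0)) :
    Finite (ConnectedComponents
      {x : ℝ × ℝ // ∀ i, a i * x.1 + b i * x.2 ≠ c i}) ∧
    Nat.card (ConnectedComponents
      {x : ℝ × ℝ // ∀ i, a i * x.1 + b i * x.2 ≠ c i}) ≤ (n ^ 2 + n + 2) / 2 := by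
  classical
  set S := {x : ℝ × ℝ // ∀ i, a i * x.1 + b i * x.2 ≠ c i} with hS
  have hwit : ∀ σ : ↥(pat2 n a b c), ∃ z : S,
      ∀ i, (σ : Fin n → Bool) i = decide (a i * (z:ℝ×ℝ).1 + b i * (z:ℝ×ℝ).2 < c i) := by
    rintro ⟨σ, x, y, h⟩
    exact ⟨⟨(x, y), fun i => (h i).1⟩, fun i => (h i).2⟩
  choose w hw using hwit
  have hsurj : Surjective (fun σ : ↥(pat2 n a b c) => ConnectedComponents.mk (w σ)) := by
    intro comp
    obtain ⟨z, rfl⟩ := ConnectedComponents.surjective_coe comp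
    have hmem : (fun i => decide (a i * (z:ℝ×ℝ).1 + b i * (z:ℝ×ℝ).2 < c i)) ∈ pat2 n a b c :=
      ⟨(z:ℝ×ℝ).1, (z:ℝ×ℝ).2, fun i => ⟨z.2 i, rfl⟩⟩
    refine ⟨⟨_, hmem⟩, ?_⟩
    apply same_pattern_same_component
    intro i
    rw [← decide_eq_decide, ← hw ⟨_, hmem⟩ i]
  have hfin : Finite (ConnectedComponents S) :=
    Finite.of_surjective _ hsurj
  refine ⟨hfin, ?_⟩
  calc Nat.card (ConnectedComponents S)
      ≤ Nat.card ↥(pat2 n a b c) := Nat.card_le_card_of_surjective _ hsurj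
    _ = (pat2 n a b c).ncard := Nat.card_coe_set_eq _
    _ ≤ (n ^ 2 + n + 2) / 2 := pat2_card n a b c hline
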